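/- arXiv:2404.02114 — 3 statements merged into one kernel-verified Lean document; each statement's English description precedes it below -/
import Mathlib

section
/- For completely multiplicative arithmetic functions f and g, and h their Dirichlet convolution h(m) = ∑_{d|m} f(d) g(m/d), one has for every real T ≥ 1: ∑_{q ≤ T} h(q²) = ∑_{a ≤ T, a squarefree} f(a) g(a) · ∑_{b,c ≥ 1, abc ≤ T} f(b)² g(c)². -/
open Finset

lemma sq_mul_sf_uniq {a₁ b₁ a₂ b₂ : ℕ} (ha₁ : Squarefree a₁) (ha₂ : Squarefree a₂)
    (hb₁ : b₁ ≠ 0) (hb₂ : b₂ ≠ 0) (h : a₁ * b₁ ^ 2 = a₂ * b₂ ^ 2) : a₁ = a₂ ∧ b₁ = b₂ := by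
  have h0₁ : a₁ ≠ 0 := ha₁.ne_zero
  have h0₂ : a₂ ≠ 0 := ha₂.ne_zero
  have ha : a₁ = a₂ := by
    apply Nat.factorization_inj (by simpa using h0₁) (by simpa using h0₂)
    ext p
    have e := congrArg (fun n => n.factorization p) h
    simp only [Nat.factorization_mul h0₁ (pow_ne_zero 2 hb₁),
      Nat.factorization_mul h0₂ (pow_ne_zero 2 hb₂), Nat.factorization_pow,
      Finsupp.add_apply, Finsupp.smul_apply, smul_eq_mul] at e
    have l₁ := ha₁.natFactorization_le_one p
    have l₂ := ha₂.natFactorization_le_one p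
    omega
  subst ha
  have hb : b₁ ^ 2 = b₂ ^ 2 := Nat.eq_of_mul_eq_mul_left (Nat.pos_of_ne_zero h0₁) h
  exact ⟨rfl, Nat.pow_left_injective two_ne_zero hb⟩

/-- For completely multiplicative `f, g` with Dirichlet convolution `h`,
`∑_{q ≤ T} h(q²) = ∑_{a ≤ T squarefree} f(a)g(a) ∑_{abc ≤ T} f(b)²g(c)²`. -/
theorem sum_squares_of_dirichlet_convolution
    (f g : ℕ → ℂ)
    (hf1 : f 1 = 1) (hf : ∀ m n : ℕ, f (m * n) = f m * f n)
    (hg1 : g 1 = 1) (hg : ∀ m n : ℕ, g (m * n) = g m * g n)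
    (h : ℕ → ℂ) (hh : ∀ m : ℕ, h m = ∑ d ∈ m.divisors, f d * g (m / d))
    (T : ℝ) (hT : 1 ≤ T) :
    ∑ q ∈ Icc 1 ⌊T⌋₊, h (q ^ 2)
      = ∑ a ∈ (Icc 1 ⌊T⌋₊).filter Squarefree,
          f a * g a *
            ∑ p ∈ (Icc 1 ⌊T⌋₊ ×ˢ Icc 1 ⌊T⌋₊).filter
                (fun p => ((a * p.1 * p.2 : ℕ) : ℝ) ≤ T),
              f p.1 ^ 2 * g p.2 ^ 2 := by
  have hT0 : (0:ℝ) ≤ T := le_trans zero_le_one hT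
  simp_rw [hh, Finset.mul_sum]
  rw [Finset.sum_sigma', Finset.sum_sigma']
  refine (Finset.sum_bij
    (fun (x : Σ _ : ℕ, ℕ × ℕ) _ => (⟨x.1 * x.2.1 * x.2.2, x.1 * x.2.1 ^ 2⟩ : Σ _ : ℕ, ℕ))
    ?_ ?_ ?_ ?_).symm
  · -- maps into target
    rintro ⟨a, b, c⟩ hx
    simp only [Finset.mem_sigma, Finset.mem_filter, Finset.mem_Icc, Finset.mem_product] at hx ⊢
    obtain ⟨⟨⟨ha1, haN⟩, hsa⟩, ⟨⟨hb1, hbN⟩, hc1, hcN⟩, habc⟩ := hx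
    have habc' : a * b * c ≤ ⌊T⌋₊ := Nat.le_floor habc
    refine ⟨⟨Nat.one_le_iff_ne_zero.2 (by positivity), habc'⟩, ?_⟩
    rw [Nat.mem_divisors]
    exact ⟨⟨a * c ^ 2, by ring⟩, by positivity⟩
  · -- injective
    rintro ⟨a₁, b₁, c₁⟩ hx₁ ⟨a₂, b₂, c₂⟩ hx₂ he
    simp only [Finset.mem_sigma, Finset.mem_filter, Finset.mem_Icc, Finset.mem_product] at hx₁ hx₂
    obtain ⟨⟨⟨ha1, _⟩, hsa₁⟩, ⟨⟨hb1, _⟩, hc1, _⟩, _⟩ := hx₁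
    obtain ⟨⟨⟨ha2, _⟩, hsa₂⟩, ⟨⟨hb2, _⟩, hc2, _⟩, _⟩ := hx₂
    simp only [Sigma.mk.inj_iff, heq_eq_eq] at he
    obtain ⟨hq, hd⟩ := he
    obtain ⟨hae, hbe⟩ := sq_mul_sf_uniq hsa₁ hsa₂ (by omega) (by omega) hd
    subst hae; subst hbe
    have : c₁ = c₂ := by
      have := hq
      have ha0 : 0 < a₁ * b₁ := by positivity
      exact Nat.eq_of_mul_eq_mul_left ha0 hq
    simp [this]
  · -- surjective
    rintro ⟨q, d⟩ hy
    simp only [Finset.mem_sigma, Finset.mem_Icc, Nat.mem_divisors] at hy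
    obtain ⟨⟨hq1, hqN⟩, hdq, hq2⟩ := hy
    have hq0 : q ≠ 0 := by omega
    have hd0 : d ≠ 0 := by rintro rfl; exact hq2 (Nat.eq_zero_of_zero_dvd hdq)
    obtain ⟨a, b, hab, hsa⟩ := Nat.sq_mul_squarefree d
    have ha0 : a ≠ 0 := by rintro rfl; simp at hab; omega
    have hb0 : b ≠ 0 := by rintro rfl; simp at hab; omega
    have hbq : b ∣ q := by
      rw [← Nat.pow_dvd_pow_iff two_ne_zero]
      exact dvd_trans (Dvd.intro a hab) hdq
    obtain ⟨m, hm⟩ := hbq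
    have hm0 : m ≠ 0 := by rintro rfl; simp at hm; exact hq0 hm
    have ham2 : a ∣ m ^ 2 := by
      have h1 : b ^ 2 * a ∣ b ^ 2 * m ^ 2 := by
        rw [hab]; rw [hm] at hdq; convert hdq using 1; ring
      exact (mul_dvd_mul_iff_left (pow_ne_zero 2 hb0)).mp h1
    have ham : a ∣ m := (hsa.dvd_pow_iff_dvd two_ne_zero).mp ham2
    obtain ⟨c, hc⟩ := ham
    have hc0 : c ≠ 0 := by rintro rfl; simp at hc; exact hm0 hc
    have hqabc : q = a * b * c := by rw [hm, hc]; ring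
    have haq : a ≤ q := Nat.le_of_dvd (by omega) ⟨b * c, by rw [hqabc]; ring⟩
    have hbq' : b ≤ q := Nat.le_of_dvd (by omega) ⟨a * c, by rw [hqabc]; ring⟩
    have hcq : c ≤ q := Nat.le_of_dvd (by omega) ⟨a * b, by rw [hqabc]; ring⟩
    refine ⟨⟨a, b, c⟩, ?_, ?_⟩
    · simp only [Finset.mem_sigma, Finset.mem_filter, Finset.mem_Icc, Finset.mem_product]
      refine ⟨⟨⟨by omega, by omega⟩, hsa⟩, ⟨⟨by omega, by omega⟩, by omega, by omega⟩, ?_⟩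
      rw [← hqabc]
      exact (Nat.le_floor_iff hT0).mp hqN
    · simp only [Sigma.mk.inj_iff, heq_eq_eq]
      exact ⟨hqabc.symm, by rw [← hab]; ring⟩
  · -- values agree
    rintro ⟨a, b, c⟩ hx
    simp only [Finset.mem_sigma, Finset.mem_filter, Finset.mem_Icc, Finset.mem_product] at hx
    obtain ⟨⟨⟨ha1, _⟩, hsa⟩, ⟨⟨hb1, _⟩, hc1, _⟩, _⟩ := hx
    have hdiv : (a * b * c) ^ 2 / (a * b ^ 2) = a * c ^ 2 := by
      have : (a * b * c) ^ 2 = (a * b ^ 2) * (a * c ^ 2) := by ring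
      rw [this, Nat.mul_div_cancel_left _ (by positivity)]
    rw [hdiv]
    have e1 : f (a * b ^ 2) = f a * f b ^ 2 := by
      rw [hf, pow_two, hf, ← pow_two]
    have e2 : g (a * c ^ 2) = g a * g c ^ 2 := by
      rw [hg, pow_two, hg, ← pow_two]
    rw [e1, e2]; ring
end

section
/- Let χ₁, χ₂ be Dirichlet characters with χ₁ not real-valued (i.e., χ₁² is not principal), and k ≥ 2 an integer. Then ∑_{q ≤ T} σ_k(χ₁,χ₂,q²) = O(T^{2k}) as T → ∞, where σ_k(χ₁,χ₂,n) = ∑_{d|n} χ₁(d) χ₂(n/d) d^k. -/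
open Finset


lemma aux_sum_inv_sq (n : ℕ) : ∑ u ∈ Icc 1 n, ((u:ℝ)^2)⁻¹ ≤ 2 := by
  have key : ∀ n : ℕ, 1 ≤ n → ∑ u ∈ Icc 1 n, ((u:ℝ)^2)⁻¹ ≤ 2 - 1/n := by
    intro n hn
    induction n, hn using Nat.le_induction with
    | base => norm_num
    | succ n hn ih =>
      rw [Finset.sum_Icc_succ_top (by omega)]
      have h1 : (1:ℝ) ≤ n := by exact_mod_cast hn
      have hc : ((((n:ℕ)+1:ℕ)):ℝ) = (n:ℝ)+1 := by push_cast; ring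
      rw [hc]
      have hkey : (((n:ℝ)+1)^2)⁻¹ ≤ 1/n - 1/((n:ℝ)+1) := by
        rw [div_sub_div _ _ (by linarith) (by linarith), inv_le_iff_one_le_mul₀ (by positivity),
          ← sub_nonneg]
        have hpos : (0:ℝ) < (n:ℝ) * ((n:ℝ)+1) := by positivity
        rw [div_mul_eq_mul_div, sub_nonneg, le_div_iff₀ hpos]
        nlinarith
      linarith
  rcases Nat.eq_zero_or_pos n with rfl | hn
  · simp
  · have h := key n hn
    have h2 : (0:ℝ) < 1/n := by positivity
    linarith

lemma aux_sum_inv_pow (n k : ℕ) (hk : 2 ≤ k) : ∑ u ∈ Icc 1 n, ((u:ℝ)^k)⁻¹ ≤ 2 := by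
  refine le_trans (Finset.sum_le_sum fun u hu => ?_) (aux_sum_inv_sq n)
  have hu1 : 1 ≤ u := (Finset.mem_Icc.mp hu).1
  have h1 : (1:ℝ) ≤ u := by exact_mod_cast hu1
  exact inv_anti₀ (by positivity) (pow_le_pow_right₀ h1 hk)


section Char
variable {N : ℕ} [NeZero N] (χ : DirichletCharacter ℂ N)

lemma aux_block (hχ : χ ≠ 1) (a : ℕ) : ∑ m ∈ Ico a (a + N), χ (m : ZMod N) = 0 := by
  have h0 : ∑ z : ZMod N, χ z = 0 := MulChar.sum_eq_zero_of_ne_one hχ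
  rw [← h0]
  refine Finset.sum_nbij' (i := fun m => ((m : ZMod N)))
    (j := fun z => a + (z - (a : ZMod N)).val) ?_ ?_ ?_ ?_ ?_
  · intro m _; exact Finset.mem_univ _
  · intro z _
    simp only [Finset.mem_Ico]
    constructor
    · exact Nat.le_add_right _ _
    · have := ZMod.val_lt (z - (a : ZMod N))
      omega
  · intro m hm
    rw [Finset.mem_Ico] at hm
    show a + (((m:ℕ):ZMod N) - ((a:ℕ):ZMod N)).val = m
    rw [← Nat.cast_sub hm.1, ZMod.val_natCast, Nat.mod_eq_of_lt (by omega)]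
    omega
  · intro z _
    push_cast
    rw [ZMod.natCast_val, ZMod.cast_id]
    ring
  · intro m _; rfl

lemma aux_partial (hχ : χ ≠ 1) (X : ℕ) : ‖∑ m ∈ Icc 1 X, χ (m : ZMod N)‖ ≤ (N : ℝ) := by
  induction X using Nat.strong_induction_on with
  | _ X ih =>
    by_cases hX : X < N
    · calc ‖∑ m ∈ Icc 1 X, χ (m : ZMod N)‖ ≤ ∑ m ∈ Icc 1 X, ‖χ (m : ZMod N)‖ :=
        norm_sum_le _ _
      _ ≤ ∑ m ∈ Icc 1 X, 1 := Finset.sum_le_sum fun m _ => χ.norm_le_one _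
      _ = ((Icc 1 X).card : ℝ) := by simp
      _ ≤ (N:ℝ) := by
          rw [Nat.card_Icc]
          have : X + 1 - 1 ≤ N := by omega
          exact_mod_cast this
    · push_neg at hX
      have hN : 1 ≤ N := (NeZero.one_le : 1 ≤ N)
      have hsplit : Icc 1 X = Icc 1 (X - N) ∪ Ico (X - N + 1) (X - N + 1 + N) := by
        ext m; simp only [Finset.mem_union, Finset.mem_Icc, Finset.mem_Ico]; omega
      have hdisj : Disjoint (Icc 1 (X - N)) (Ico (X - N + 1) (X - N + 1 + N)) := by
        rw [Finset.disjoint_left]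
        intro m hm1 hm2
        simp only [Finset.mem_Icc] at hm1
        simp only [Finset.mem_Ico] at hm2
        omega
      rw [hsplit, Finset.sum_union hdisj, aux_block χ hχ, add_zero]
      exact ih (X - N) (by omega)

lemma aux_weighted (hχ : χ ≠ 1) (M K : ℕ) (hK : K ≠ 0) :
    ‖∑ m ∈ Icc 1 M, χ (m : ZMod N) * (m : ℂ) ^ K‖ ≤ 2 * N * (M : ℝ) ^ K := by
  set c : ℕ → ℝ := fun j => ((j:ℝ)+1) ^ K - (j:ℝ) ^ K with hc
  have hc0 : ∀ j, 0 ≤ c j := by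
    intro j
    have : (j:ℝ) ^ K ≤ ((j:ℝ)+1) ^ K := pow_le_pow_left₀ (by positivity) (by linarith) K
    simpa [hc] using this
  have htel : ∀ m : ℕ, ∑ j ∈ range m, c j = (m:ℝ) ^ K := by
    intro m
    have := Finset.sum_range_sub (f := fun i => ((i:ℝ)) ^ K) m
    simp only [Nat.cast_succ] at this
    rw [hc]
    simp only [this]
    rw [Nat.cast_zero, zero_pow hK, sub_zero]
  have hmain : ∑ m ∈ Icc 1 M, χ (m : ZMod N) * (m : ℂ) ^ K
      = ∑ j ∈ range M, (c j : ℂ) * ∑ m ∈ Icc (j+1) M, χ (m : ZMod N) := by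
    have step1 : ∀ m ∈ Icc 1 M, χ (m : ZMod N) * (m : ℂ) ^ K
        = ∑ j ∈ range M, (if j < m then (c j : ℂ) * χ (m : ZMod N) else 0) := by
      intro m hm
      rw [Finset.mem_Icc] at hm
      rw [Finset.sum_ite, Finset.sum_const_zero, add_zero]
      have hf : (range M).filter (fun j => j < m) = range m := by
        ext j; simp only [Finset.mem_filter, Finset.mem_range]; omega
      rw [hf, ← Finset.sum_mul]
      have : (∑ j ∈ range m, (c j : ℂ)) = ((m:ℕ):ℂ)^K := by
        rw [← Complex.ofReal_sum, htel m]
        push_cast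
        ring
      rw [this]
      ring
    rw [Finset.sum_congr rfl step1, Finset.sum_comm]
    refine Finset.sum_congr rfl fun j hj => ?_
    rw [Finset.sum_ite, Finset.sum_const_zero, add_zero]
    have hf : (Icc 1 M).filter (fun m => j < m) = Icc (j+1) M := by
      ext m; simp only [Finset.mem_filter, Finset.mem_Icc]; omega
    rw [hf, Finset.mul_sum]
  rw [hmain]
  have hblock : ∀ j, ‖∑ m ∈ Icc (j+1) M, χ (m : ZMod N)‖ ≤ 2 * N := by
    intro j
    by_cases hjM : j ≤ M
    · have hsplit : Icc 1 M = Icc 1 j ∪ Icc (j+1) M := by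
        ext m; simp only [Finset.mem_union, Finset.mem_Icc]; omega
      have hdisj : Disjoint (Icc 1 j) (Icc (j+1) M) := by
        rw [Finset.disjoint_left]
        intro m hm1 hm2
        simp only [Finset.mem_Icc] at hm1 hm2
        omega
      have heq : ∑ m ∈ Icc (j+1) M, χ (m : ZMod N)
          = (∑ m ∈ Icc 1 M, χ (m : ZMod N)) - ∑ m ∈ Icc 1 j, χ (m : ZMod N) := by
        rw [hsplit, Finset.sum_union hdisj]; ring
      rw [heq]
      calc ‖_ - _‖ ≤ ‖∑ m ∈ Icc 1 M, χ (m : ZMod N)‖ + ‖∑ m ∈ Icc 1 j, χ (m : ZMod N)‖ :=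
        norm_sub_le _ _
      _ ≤ (N:ℝ) + (N:ℝ) := add_le_add (aux_partial χ hχ M) (aux_partial χ hχ j)
      _ = 2 * N := by ring
    · have : Icc (j+1) M = ∅ := by
        rw [Finset.Icc_eq_empty_iff]; omega
      rw [this]
      simp
  calc ‖∑ j ∈ range M, (c j : ℂ) * ∑ m ∈ Icc (j+1) M, χ (m : ZMod N)‖
      ≤ ∑ j ∈ range M, ‖(c j : ℂ) * ∑ m ∈ Icc (j+1) M, χ (m : ZMod N)‖ := norm_sum_le _ _
    _ ≤ ∑ j ∈ range M, c j * (2 * N) := by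
        refine Finset.sum_le_sum fun j _ => ?_
        rw [norm_mul, Complex.norm_real, Real.norm_of_nonneg (hc0 j)]
        exact mul_le_mul_of_nonneg_left (hblock j) (hc0 j)
    _ = (∑ j ∈ range M, c j) * (2 * N) := by rw [← Finset.sum_mul]
    _ = (M:ℝ)^K * (2*N) := by rw [htel]
    _ = 2 * N * (M:ℝ)^K := by ring

end Char


lemma aux_dvdX {u m q : ℕ} (hu : Squarefree u) (hm : m ≠ 0) (hd : u * m ^ 2 ∣ q ^ 2) :
    u * m ∣ q := by
  have hm2 : m ^ 2 ∣ q ^ 2 := dvd_trans (dvd_mul_left _ _) hd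
  have hmq : m ∣ q := (Nat.pow_dvd_pow_iff two_ne_zero).mp hm2
  obtain ⟨t, rfl⟩ := hmq
  have hut2 : u ∣ t ^ 2 := by
    have h : u * m ^ 2 ∣ m ^ 2 * t ^ 2 := by rwa [mul_pow] at hd
    rw [mul_comm u (m ^ 2)] at h
    exact (mul_dvd_mul_iff_left (pow_ne_zero 2 hm)).mp h
  have hut : u ∣ t := (hu.dvd_pow_iff_dvd two_ne_zero).mp hut2
  obtain ⟨s, rfl⟩ := hut
  exact ⟨s, by ring⟩

lemma aux_uniqueX {u₁ m₁ u₂ m₂ : ℕ} (h1 : Squarefree u₁) (h2 : Squarefree u₂)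
    (hm₁ : m₁ ≠ 0) (heq : u₁ * m₁ ^ 2 = u₂ * m₂ ^ 2) : u₁ = u₂ ∧ m₁ = m₂ := by
  have hu₁ : u₁ ≠ 0 := h1.ne_zero
  have hu₂ : u₂ ≠ 0 := h2.ne_zero
  have hm₂ : m₂ ≠ 0 := by
    rintro rfl
    apply Nat.mul_ne_zero hu₁ (pow_ne_zero 2 hm₁)
    simpa using heq
  set g := Nat.gcd m₁ m₂ with hg
  have hg0 : g ≠ 0 := Nat.gcd_ne_zero_left hm₁
  have hgpos : 0 < g := Nat.pos_of_ne_zero hg0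
  have hab : Nat.Coprime (m₁ / g) (m₂ / g) := Nat.coprime_div_gcd_div_gcd hgpos
  set a := m₁ / g with hadef
  set b := m₂ / g with hbdef
  have ha : g * a = m₁ := Nat.mul_div_cancel' (Nat.gcd_dvd_left _ _)
  have hb : g * b = m₂ := Nat.mul_div_cancel' (Nat.gcd_dvd_right _ _)
  have heq2 : u₁ * (g * a) ^ 2 = u₂ * (g * b) ^ 2 := by rw [ha, hb]; exact heq
  have key : u₁ * a ^ 2 = u₂ * b ^ 2 := by
    refine mul_left_cancel₀ (pow_ne_zero 2 hg0) ?_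
    calc g ^ 2 * (u₁ * a ^ 2) = u₁ * (g * a) ^ 2 := by ring
      _ = u₂ * (g * b) ^ 2 := heq2
      _ = g ^ 2 * (u₂ * b ^ 2) := by ring
  have hb1 : b = 1 := by
    have hdvd : b ^ 2 ∣ u₁ * a ^ 2 := ⟨u₂, by rw [key]; ring⟩
    have hcop : Nat.Coprime (b ^ 2) (a ^ 2) := Nat.Coprime.pow 2 2 hab.symm
    have hbu : b ^ 2 ∣ u₁ := Nat.Coprime.dvd_of_dvd_mul_right hcop hdvd
    rw [pow_two] at hbu
    exact Nat.isUnit_iff.mp (h1 b hbu)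
  have ha1 : a = 1 := by
    have hdvd : a ^ 2 ∣ u₂ * b ^ 2 := ⟨u₁, by rw [← key]; ring⟩
    have hcop : Nat.Coprime (a ^ 2) (b ^ 2) := Nat.Coprime.pow 2 2 hab
    have hau : a ^ 2 ∣ u₂ := Nat.Coprime.dvd_of_dvd_mul_right hcop hdvd
    rw [pow_two] at hau
    exact Nat.isUnit_iff.mp (h2 a hau)
  have hm : m₁ = m₂ := by rw [← ha, ← hb, ha1, hb1]
  refine ⟨?_, hm⟩
  have h3 : u₁ * m₁ ^ 2 = u₂ * m₁ ^ 2 := by rw [heq, hm]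
  exact Nat.eq_of_mul_eq_mul_right (Nat.pos_of_ne_zero (pow_ne_zero 2 hm₁)) h3


noncomputable def usf (d : ℕ) : ℕ := (Nat.sq_mul_squarefree d).choose

noncomputable def msf (d : ℕ) : ℕ := (Nat.sq_mul_squarefree d).choose_spec.choose

lemma usf_spec (d : ℕ) : msf d ^ 2 * usf d = d ∧ Squarefree (usf d) :=
  (Nat.sq_mul_squarefree d).choose_spec.choose_spec



lemma aux_bij (n : ℕ) (F : ℕ → ℕ → ℂ) :
    ∑ q ∈ Icc 1 n, ∑ d ∈ (q ^ 2).divisors, F q d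
      = ∑ p ∈ ((Icc 1 n ×ˢ Icc 1 n ×ˢ Icc 1 n).filter
          fun p : ℕ × ℕ × ℕ => Squarefree p.1 ∧ p.1 * p.2.1 * p.2.2 ≤ n),
          F (p.1 * p.2.1 * p.2.2) (p.1 * p.2.2 ^ 2) := by
  rw [← Finset.sum_sigma (Icc 1 n) (fun q => (q ^ 2).divisors) (fun x => F x.1 x.2)]
  refine Finset.sum_nbij' (i := fun x : Σ _ : ℕ, ℕ =>
      (usf x.2, (x.1 / (usf x.2 * msf x.2), msf x.2)))
    (j := fun p : ℕ × ℕ × ℕ => ⟨p.1 * p.2.1 * p.2.2, p.1 * p.2.2 ^ 2⟩) ?_ ?_ ?_ ?_ ?_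
  · -- hi : maps into triple set
    rintro ⟨q, d⟩ hx
    rw [Finset.mem_sigma, Finset.mem_Icc, Nat.mem_divisors] at hx
    obtain ⟨⟨hq1, hqn⟩, hdvd, hq0⟩ := hx
    have hq : q ≠ 0 := by
      intro h; apply hq0; rw [h]; ring
    have hd0 : d ≠ 0 := by
      rintro rfl
      exact hq (by simpa [pow_eq_zero_iff] using Nat.eq_zero_of_zero_dvd hdvd)
    obtain ⟨hspec, hsf⟩ := usf_spec d
    set u := usf d with hu
    set m := msf d with hm
    have hm0 : m ≠ 0 := by rintro h; rw [h] at hspec; simp at hspec; omega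
    have hu0 : u ≠ 0 := hsf.ne_zero
    have hum : u * m ∣ q := aux_dvdX hsf hm0 (by rw [mul_comm u (m^2), hspec]; exact hdvd)
    obtain ⟨v, hv⟩ := hum
    have hv0 : v ≠ 0 := by rintro rfl; rw [mul_zero] at hv; exact hq hv
    simp only [Finset.mem_filter, Finset.mem_product, Finset.mem_Icc]
    have hdiv : q / (u * m) = v := by
      rw [hv, Nat.mul_div_cancel_left _ (Nat.pos_of_ne_zero (Nat.mul_ne_zero hu0 hm0))]
    have hprod : u * (q / (u * m)) * m = q := by rw [hdiv, hv]; ring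
    have huq : u ≤ q := by
      have : u ≤ u * (v * m) :=
        Nat.le_mul_of_pos_right _ (Nat.pos_of_ne_zero (Nat.mul_ne_zero hv0 hm0))
      rw [hv]; calc u ≤ u * (v * m) := this
        _ = u * m * v := by ring
    have hvq : v ≤ q := by
      have : v ≤ v * (u * m) :=
        Nat.le_mul_of_pos_right _ (Nat.pos_of_ne_zero (Nat.mul_ne_zero hu0 hm0))
      rw [hv]; calc v ≤ v * (u * m) := this
        _ = u * m * v := by ring
    have hmq : m ≤ q := by
      have : m ≤ m * (u * v) :=
        Nat.le_mul_of_pos_right _ (Nat.pos_of_ne_zero (Nat.mul_ne_zero hu0 hv0))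
      rw [hv]; calc m ≤ m * (u * v) := this
        _ = u * m * v := by ring
    refine ⟨⟨⟨?_, le_trans huq hqn⟩, ⟨?_, ?_⟩, ?_, le_trans hmq hqn⟩, hsf,
      by rw [hprod]; exact hqn⟩
    · omega
    · rw [hdiv]; omega
    · rw [hdiv]; exact le_trans hvq hqn
    · omega
  · -- hj : maps into sigma set
    rintro ⟨u, v, m⟩ hp
    simp only [Finset.mem_filter, Finset.mem_product, Finset.mem_Icc] at hp
    obtain ⟨⟨⟨hu1, _⟩, ⟨hv1, _⟩, hm1, _⟩, hsf, hle⟩ := hp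
    rw [Finset.mem_sigma, Finset.mem_Icc, Nat.mem_divisors]
    have hpos : 0 < u * v * m := Nat.mul_pos (Nat.mul_pos hu1 hv1) hm1
    exact ⟨⟨hpos, hle⟩, ⟨u * v ^ 2, by ring⟩, pow_ne_zero 2 hpos.ne'⟩
  · -- left inverse
    rintro ⟨q, d⟩ hx
    rw [Finset.mem_sigma, Finset.mem_Icc, Nat.mem_divisors] at hx
    obtain ⟨⟨hq1, hqn⟩, hdvd, hq0⟩ := hx
    have hq : q ≠ 0 := by intro h; apply hq0; rw [h]; ring
    have hd0 : d ≠ 0 := by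
      rintro rfl
      exact hq (by simpa [pow_eq_zero_iff] using Nat.eq_zero_of_zero_dvd hdvd)
    obtain ⟨hspec, hsf⟩ := usf_spec d
    set u := usf d
    set m := msf d
    have hm0 : m ≠ 0 := by rintro h; rw [h] at hspec; simp at hspec; omega
    have hu0 : u ≠ 0 := hsf.ne_zero
    have hum : u * m ∣ q := aux_dvdX hsf hm0 (by rw [mul_comm u (m^2), hspec]; exact hdvd)
    have hprod : u * (q / (u * m)) * m = q := by
      obtain ⟨v, hv⟩ := hum
      rw [hv, Nat.mul_div_cancel_left _ (Nat.pos_of_ne_zero (Nat.mul_ne_zero hu0 hm0))]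
      ring
    have hd : u * m ^ 2 = d := by rw [← hspec]; ring
    simp only
    congr 1
  · -- right inverse
    rintro ⟨u, v, m⟩ hp
    simp only [Finset.mem_filter, Finset.mem_product, Finset.mem_Icc] at hp
    obtain ⟨⟨⟨hu1, _⟩, ⟨hv1, _⟩, hm1, _⟩, hsf, hle⟩ := hp
    obtain ⟨hspec, hsf'⟩ := usf_spec (u * m ^ 2)
    have hm0' : msf (u * m ^ 2) ≠ 0 := by
      intro h; rw [h] at hspec; simp at hspec
      rcases hspec with h | h <;> omega
    have huni := aux_uniqueX hsf' hsf hm0'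
      (by rw [mul_comm (usf _) _, hspec])
    obtain ⟨hueq, hmeq⟩ := huni
    simp only [hueq, hmeq]
    have : u * v * m / (u * m) = v := by
      rw [show u * v * m = v * (u * m) by ring,
        Nat.mul_div_cancel v (Nat.pos_of_ne_zero (by positivity))]
    rw [this]
  · -- values agree
    rintro ⟨q, d⟩ hx
    rw [Finset.mem_sigma, Finset.mem_Icc, Nat.mem_divisors] at hx
    obtain ⟨⟨hq1, hqn⟩, hdvd, hq0⟩ := hx
    have hq : q ≠ 0 := by intro h; apply hq0; rw [h]; ring
    have hd0 : d ≠ 0 := by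
      rintro rfl
      exact hq (by simpa [pow_eq_zero_iff] using Nat.eq_zero_of_zero_dvd hdvd)
    obtain ⟨hspec, hsf⟩ := usf_spec d
    set u := usf d
    set m := msf d
    have hm0 : m ≠ 0 := by rintro h; rw [h] at hspec; simp at hspec; omega
    have hu0 : u ≠ 0 := hsf.ne_zero
    have hum : u * m ∣ q := aux_dvdX hsf hm0 (by rw [mul_comm u (m^2), hspec]; exact hdvd)
    have hprod : u * (q / (u * m)) * m = q := by
      obtain ⟨v, hv⟩ := hum
      rw [hv, Nat.mul_div_cancel_left _ (Nat.pos_of_ne_zero (Nat.mul_ne_zero hu0 hm0))]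
      ring
    have hd : u * m ^ 2 = d := by rw [← hspec]; ring
    simp only
    rw [hprod, hd]


section Main
variable {N₁ N₂ : ℕ} [NeZero N₁] (χ₁ : DirichletCharacter ℂ N₁) (χ₂ : DirichletCharacter ℂ N₂)

lemma aux_inner (hχ : χ₁ ^ 2 ≠ 1) (k : ℕ) (hk : 2 ≤ k) (n u v : ℕ)
    (hu : 1 ≤ u) (hv : 1 ≤ v) :
    ‖∑ m ∈ Icc 1 n, if Squarefree u ∧ u * v * m ≤ n then
        χ₁ ((u * m ^ 2 : ℕ) : ZMod N₁) * χ₂ ((((u * v * m) ^ 2 / (u * m ^ 2) : ℕ)) : ZMod N₂)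
          * ((u * m ^ 2 : ℕ) : ℂ) ^ k else 0‖
      ≤ 2 * N₁ * (n : ℝ) ^ (2 * k) * ((u : ℝ) ^ k)⁻¹ * ((v : ℝ) ^ (2 * k))⁻¹ := by
  have hu' : (1:ℝ) ≤ (u:ℝ) := by exact_mod_cast hu
  have hv' : (1:ℝ) ≤ (v:ℝ) := by exact_mod_cast hv
  have hu0 : (u:ℝ) ≠ 0 := by linarith
  have hv0 : (v:ℝ) ≠ 0 := by linarith
  by_cases hsf : Squarefree u
  · simp only [hsf, true_and]
    have huv : 0 < u * v := Nat.mul_pos hu hv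
    rw [← Finset.sum_filter]
    have hfil : (Icc 1 n).filter (fun m => u * v * m ≤ n) = Icc 1 (n / (u * v)) := by
      ext m
      simp only [Finset.mem_filter, Finset.mem_Icc]
      constructor
      · rintro ⟨⟨h1, _⟩, h2⟩
        refine ⟨h1, (Nat.le_div_iff_mul_le huv).mpr ?_⟩
        rw [mul_comm]; exact h2
      · rintro ⟨h1, h2⟩
        have h3 : m * (u * v) ≤ n := (Nat.le_div_iff_mul_le huv).mp h2
        have h4 : m ≤ n := le_trans (Nat.le_mul_of_pos_right _ huv) h3
        refine ⟨⟨h1, h4⟩, ?_⟩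
        rw [mul_comm]; exact h3
    rw [hfil]
    set M := n / (u * v) with hM
    set C : ℂ := χ₁ ((u : ℕ) : ZMod N₁) * χ₂ ((u * v ^ 2 : ℕ) : ZMod N₂) * ((u : ℕ) : ℂ) ^ k
      with hC
    have hGm : ∀ m ∈ Icc 1 M,
        χ₁ ((u * m ^ 2 : ℕ) : ZMod N₁) * χ₂ ((((u * v * m) ^ 2 / (u * m ^ 2) : ℕ)) : ZMod N₂)
          * ((u * m ^ 2 : ℕ) : ℂ) ^ k
        = C * ((χ₁ ^ 2) ((m : ℕ) : ZMod N₁) * ((m : ℕ) : ℂ) ^ (2 * k)) := by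
      intro m hm
      rw [Finset.mem_Icc] at hm
      have hm0 : m ≠ 0 := by omega
      have hqd : (u * v * m) ^ 2 / (u * m ^ 2) = u * v ^ 2 := by
        have h1 : (u * v * m) ^ 2 = (u * m ^ 2) * (u * v ^ 2) := by ring
        rw [h1, Nat.mul_div_cancel_left _
          (Nat.mul_pos hu (Nat.pos_of_ne_zero (pow_ne_zero 2 hm0)))]
      rw [hqd]
      have hcast : ((u * m ^ 2 : ℕ) : ZMod N₁) = ((u:ℕ) : ZMod N₁) * ((m:ℕ) : ZMod N₁) ^ 2 := by
        push_cast; ring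
      rw [hcast, map_mul, map_pow]
      have hpow : ((u * m ^ 2 : ℕ) : ℂ) ^ k = ((u:ℕ) : ℂ) ^ k * ((m:ℕ) : ℂ) ^ (2 * k) := by
        push_cast
        rw [mul_pow, ← pow_mul, mul_comm 2 k]
      rw [hpow, MulChar.pow_apply' χ₁ two_ne_zero]
      rw [hC]
      ring
    rw [Finset.sum_congr rfl hGm, ← Finset.mul_sum, norm_mul]
    have hCle : ‖C‖ ≤ (u:ℝ) ^ k := by
      rw [hC, norm_mul, norm_mul, norm_pow, Complex.norm_natCast]
      calc ‖χ₁ _‖ * ‖χ₂ _‖ * (u:ℝ) ^ k ≤ 1 * 1 * (u:ℝ) ^ k := by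
            gcongr
            · exact DirichletCharacter.norm_le_one _ _
            · exact DirichletCharacter.norm_le_one _ _
        _ = (u:ℝ) ^ k := by ring
    have hW := aux_weighted (χ₁ ^ 2) hχ M (2 * k) (by omega)
    calc ‖C‖ * ‖∑ m ∈ Icc 1 M, (χ₁ ^ 2) ((m : ℕ) : ZMod N₁) * ((m : ℕ) : ℂ) ^ (2 * k)‖
        ≤ (u:ℝ) ^ k * (2 * N₁ * (M:ℝ) ^ (2 * k)) := by
          exact mul_le_mul hCle hW (norm_nonneg _) (by positivity)
      _ ≤ (u:ℝ) ^ k * (2 * N₁ * ((n:ℝ) / ((u:ℝ) * (v:ℝ))) ^ (2 * k)) := by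
          have hMle : (M:ℝ) ≤ (n:ℝ) / ((u:ℝ) * (v:ℝ)) := by
            have h := Nat.cast_div_le (m := n) (n := u * v) (α := ℝ)
            push_cast at h
            exact h
          gcongr
      _ = 2 * N₁ * (n : ℝ) ^ (2 * k) * ((u : ℝ) ^ k)⁻¹ * ((v : ℝ) ^ (2 * k))⁻¹ := by
          have h2k : (u:ℝ) ^ (2 * k) = (u:ℝ) ^ k * (u:ℝ) ^ k := by
            rw [two_mul, pow_add]
          rw [div_pow, mul_pow, h2k]
          field_simp
  · simp only [hsf, false_and, if_false, Finset.sum_const_zero, norm_zero]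
    positivity

lemma aux_main (hχ : χ₁ ^ 2 ≠ 1) (k : ℕ) (hk : 2 ≤ k) (n : ℕ) :
    ‖∑ q ∈ Icc 1 n, ∑ d ∈ (q ^ 2).divisors,
        χ₁ (d : ZMod N₁) * χ₂ ((q ^ 2 / d : ℕ) : ZMod N₂) * (d : ℂ) ^ k‖
      ≤ 8 * N₁ * (n : ℝ) ^ (2 * k) := by
  rw [aux_bij n (fun q d => χ₁ (d : ZMod N₁) * χ₂ ((q ^ 2 / d : ℕ) : ZMod N₂) * (d : ℂ) ^ k)]
  rw [Finset.sum_filter, Finset.sum_product]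
  simp only [Finset.sum_product]
  calc ‖∑ u ∈ Icc 1 n, ∑ v ∈ Icc 1 n, ∑ m ∈ Icc 1 n,
        if Squarefree u ∧ u * v * m ≤ n then
          χ₁ ((u * m ^ 2 : ℕ) : ZMod N₁)
            * χ₂ ((((u * v * m) ^ 2 / (u * m ^ 2) : ℕ)) : ZMod N₂)
            * ((u * m ^ 2 : ℕ) : ℂ) ^ k else 0‖
      ≤ ∑ u ∈ Icc 1 n, ∑ v ∈ Icc 1 n,
          (2 * N₁ * (n : ℝ) ^ (2 * k) * ((u : ℝ) ^ k)⁻¹ * ((v : ℝ) ^ (2 * k))⁻¹) := by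
        refine le_trans (norm_sum_le _ _) (Finset.sum_le_sum fun u hu => ?_)
        refine le_trans (norm_sum_le _ _) (Finset.sum_le_sum fun v hv => ?_)
        exact aux_inner χ₁ χ₂ hχ k hk n u v (Finset.mem_Icc.mp hu).1 (Finset.mem_Icc.mp hv).1
    _ = 2 * N₁ * (n : ℝ) ^ (2 * k) * ((∑ u ∈ Icc 1 n, ((u : ℝ) ^ k)⁻¹)
          * ∑ v ∈ Icc 1 n, ((v : ℝ) ^ (2 * k))⁻¹) := by
        rw [Finset.sum_mul_sum, Finset.mul_sum]
        refine Finset.sum_congr rfl fun u _ => ?_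
        rw [Finset.mul_sum]
        refine Finset.sum_congr rfl fun v _ => ?_
        ring
    _ ≤ 2 * N₁ * (n : ℝ) ^ (2 * k) * (2 * 2) := by
        have h1 := aux_sum_inv_pow n k hk
        have h2 := aux_sum_inv_pow n (2 * k) (by omega)
        have hs1 : (0:ℝ) ≤ ∑ u ∈ Icc 1 n, ((u : ℝ) ^ k)⁻¹ := by positivity
        gcongr
    _ = 8 * N₁ * (n : ℝ) ^ (2 * k) := by ring

end Main


/-- For Dirichlet characters with `χ₁` not real-valued and `k ≥ 2`,
`∑_{q ≤ T} σ_k(χ₁,χ₂,q²) = O(T^{2k})`. -/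
theorem twisted_divisor_sum_bound_nonreal (N₁ N₂ : ℕ)
    (χ₁ : DirichletCharacter ℂ N₁) (χ₂ : DirichletCharacter ℂ N₂)
    (hnonreal : ∃ n : ℕ, (χ₁ (n : ZMod N₁)).im ≠ 0)
    (k : ℕ) (hk : 2 ≤ k) :
    (fun T : ℝ =>
      ∑ q ∈ Icc 1 ⌊T⌋₊, ∑ d ∈ (q ^ 2).divisors,
        χ₁ (d : ZMod N₁) * χ₂ ((q ^ 2 / d : ℕ) : ZMod N₂) * (d : ℂ) ^ k)
      =O[Filter.atTop] fun T : ℝ => T ^ (2 * k) := by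
  obtain ⟨n₀, hn₀⟩ := hnonreal
  have him : ∀ z : ℂ, z ^ 2 = 1 → z.im = 0 := by
    intro z hz
    have h : (z - 1) * (z + 1) = 0 := by linear_combination hz
    rcases mul_eq_zero.mp h with h | h
    · rw [sub_eq_zero.mp h]; rfl
    · rw [eq_neg_of_add_eq_zero_left h]; simp
  have h0 : χ₁ ((n₀ : ℕ) : ZMod N₁) ≠ 0 := by
    intro h; rw [h] at hn₀; simp at hn₀
  have hunit : IsUnit ((n₀ : ℕ) : ZMod N₁) := by
    by_contra h
    exact h0 (χ₁.map_nonunit h)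
  have h1 : (χ₁ ((n₀ : ℕ) : ZMod N₁)) ^ 2 ≠ 1 := fun h => hn₀ (him _ h)
  have hχ : χ₁ ^ 2 ≠ 1 := by
    intro h
    apply h1
    rw [← MulChar.pow_apply' χ₁ two_ne_zero, h, MulChar.one_apply hunit]
  have hN₁ : N₁ ≠ 0 := by
    rintro rfl
    have h2 : ((n₀ : ℕ) : ZMod 0) = 1 ∨ ((n₀ : ℕ) : ZMod 0) = -1 := Int.isUnit_iff.mp hunit
    rcases h2 with h | h
    · rw [h] at hn₀; simp at hn₀
    · apply h1
      rw [h, ← map_pow]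
      norm_num
  haveI : NeZero N₁ := ⟨hN₁⟩
  rw [Asymptotics.isBigO_iff]
  refine ⟨8 * N₁, ?_⟩
  filter_upwards [Filter.eventually_ge_atTop (1:ℝ)] with T hT
  have hmain := aux_main χ₁ χ₂ hχ k hk ⌊T⌋₊
  refine hmain.trans ?_
  have hTpos : (0:ℝ) ≤ T := by linarith
  rw [Real.norm_of_nonneg (by positivity : (0:ℝ) ≤ T ^ (2 * k))]
  have hfl : ((⌊T⌋₊ : ℕ) : ℝ) ≤ T := Nat.floor_le hTpos
  gcongr
end

section
/- For a Dirichlet character χ mod N with χ² not principal and integer k ≥ 1, the double sum S(X) = ∑_{b,c ≥ 1, bc ≤ X} χ(b)² b^{2k} is O(X^{2k}) as X → ∞. -/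
open Finset

private lemma tele_pow {R : Type*} [CommRing R] (K : ℕ) (hK : 1 ≤ K) (b : ℕ) :
    ((b : R)) ^ K = ∑ d ∈ Icc 1 b, (((d : ℕ) : R) ^ K - ((d - 1 : ℕ) : R) ^ K) := by
  rw [← Finset.Ico_add_one_right_eq_Icc, Finset.sum_Ico_eq_sum_range]
  simp only [Nat.succ_sub_one, Nat.add_sub_cancel, Nat.add_sub_cancel_left]
  have h : ∀ i ∈ range b, ((1 + i : ℕ) : R) ^ K - ((i : ℕ) : R) ^ K
      = (fun j : ℕ => ((j : ℕ) : R) ^ K) (i + 1) - (fun j : ℕ => ((j : ℕ) : R) ^ K) i := by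
    intro i _; simp [add_comm 1 i]
  rw [Finset.sum_congr rfl h, Finset.sum_range_sub (fun j : ℕ => ((j : ℕ) : R) ^ K)]
  simp [zero_pow (by omega : K ≠ 0)]

private lemma shifted_period_sum {N : ℕ} [NeZero N] (φ : DirichletCharacter ℂ N)
    (hφ : φ ≠ 1) (n : ℕ) :
    ∑ b ∈ range N, φ ((n + b : ℕ) : ZMod N) = 0 := by
  have h1 : ∑ b ∈ range N, φ ((n + b : ℕ) : ZMod N)
      = ∑ a : ZMod N, φ ((n : ZMod N) + a) := by
    refine Finset.sum_nbij' (fun b => ((b : ℕ) : ZMod N)) (fun a => a.val) ?_ ?_ ?_ ?_ ?_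
    · intro a _; exact Finset.mem_univ _
    · intro a _; exact Finset.mem_range.2 (ZMod.val_lt a)
    · intro a ha; exact ZMod.val_cast_of_lt (Finset.mem_range.1 ha)
    · intro a _; exact ZMod.natCast_rightInverse a
    · intro a _; push_cast; ring_nf
  have h2 : ∑ a : ZMod N, φ ((n : ZMod N) + a) = ∑ a : ZMod N, φ a :=
    Equiv.sum_comp (Equiv.addLeft ((n : ℕ) : ZMod N)) φ
  rw [h1, h2, MulChar.sum_eq_zero_of_ne_one hφ]

private lemma partial_sum_eq {N : ℕ} [NeZero N] (φ : DirichletCharacter ℂ N)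
    (hφ : φ ≠ 1) (n : ℕ) :
    ∑ b ∈ range n, φ ((b : ℕ) : ZMod N) = ∑ b ∈ range (n % N), φ ((b : ℕ) : ZMod N) := by
  induction n using Nat.strong_induction_on with
  | _ n ih =>
    rcases lt_or_ge n N with h | h
    · rw [Nat.mod_eq_of_lt h]
    · have hN : 0 < N := Nat.pos_of_ne_zero (NeZero.ne N)
      have hn : n = (n - N) + N := by omega
      rw [hn, Finset.sum_range_add, shifted_period_sum φ hφ, add_zero, Nat.add_mod_right]
      exact ih _ (by omega)

private lemma range_bound {N : ℕ} [NeZero N] (φ : DirichletCharacter ℂ N) (hφ : φ ≠ 1) :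
    ∀ n, ‖∑ b ∈ range n, φ ((b : ℕ) : ZMod N)‖ ≤ ∑ b ∈ range N, ‖φ ((b : ℕ) : ZMod N)‖ := by
  intro n
  rw [partial_sum_eq φ hφ n]
  refine le_trans (norm_sum_le _ _) ?_
  exact Finset.sum_le_sum_of_subset_of_nonneg
    (Finset.range_subset_range.2 (Nat.mod_lt _ (Nat.pos_of_ne_zero (NeZero.ne N))).le)
    (fun _ _ _ => norm_nonneg _)

private lemma interval_bound {N : ℕ} (φ : DirichletCharacter ℂ N) (C : ℝ)
    (hC : ∀ n, ‖∑ b ∈ range n, φ ((b : ℕ) : ZMod N)‖ ≤ C)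
    (d Y : ℕ) : ‖∑ b ∈ Icc d Y, φ ((b : ℕ) : ZMod N)‖ ≤ 2 * C := by
  have hC0 : 0 ≤ C := le_trans (norm_nonneg _) (hC 0)
  rcases le_or_gt d Y with h | h
  · rw [← Finset.Ico_add_one_right_eq_Icc, Finset.sum_Ico_eq_sub _ (by omega)]
    calc ‖_ - _‖ ≤ ‖∑ b ∈ range (Y+1), φ ((b:ℕ) : ZMod N)‖
        + ‖∑ b ∈ range d, φ ((b:ℕ) : ZMod N)‖ := norm_sub_le _ _
      _ ≤ 2 * C := by have := hC (Y+1); have := hC d; linarith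
  · rw [Finset.Icc_eq_empty (by omega)]
    simpa using by linarith

private lemma abel_bound {N : ℕ} (φ : DirichletCharacter ℂ N) (K : ℕ) (hK : 1 ≤ K) (C : ℝ)
    (hC : ∀ d Y : ℕ, ‖∑ b ∈ Icc d Y, φ ((b : ℕ) : ZMod N)‖ ≤ C) (Y : ℕ) :
    ‖∑ b ∈ Icc 1 Y, φ ((b : ℕ) : ZMod N) * ((b : ℕ) : ℂ) ^ K‖ ≤ C * ((Y : ℕ) : ℝ) ^ K := by
  have hC0 : 0 ≤ C := le_trans (norm_nonneg _) (hC 1 0)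
  have step1 : ∑ b ∈ Icc 1 Y, φ ((b : ℕ) : ZMod N) * ((b : ℕ) : ℂ) ^ K
      = ∑ d ∈ Icc 1 Y, (((d : ℕ) : ℂ) ^ K - ((d - 1 : ℕ) : ℂ) ^ K)
          * ∑ b ∈ Icc d Y, φ ((b : ℕ) : ZMod N) := by
    have h : ∀ b ∈ Icc 1 Y, φ ((b : ℕ) : ZMod N) * ((b : ℕ) : ℂ) ^ K
        = ∑ d ∈ Icc 1 b, (((d : ℕ) : ℂ) ^ K - ((d - 1 : ℕ) : ℂ) ^ K) * φ ((b:ℕ) : ZMod N) := by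
      intro b _
      rw [← Finset.sum_mul, ← tele_pow K hK b, mul_comm]
    rw [Finset.sum_congr rfl h,
      Finset.sum_comm' (t := fun b => Icc 1 b) (s' := fun d => Icc d Y) (t' := Icc 1 Y)
        (by intro b d; simp only [Finset.mem_Icc]; omega)]
    simp_rw [Finset.mul_sum]
  rw [step1]
  calc ‖_‖ ≤ ∑ d ∈ Icc 1 Y, ‖(((d : ℕ) : ℂ) ^ K - ((d - 1 : ℕ) : ℂ) ^ K)
          * ∑ b ∈ Icc d Y, φ ((b : ℕ) : ZMod N)‖ := norm_sum_le _ _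
    _ ≤ ∑ d ∈ Icc 1 Y, (((d : ℕ) : ℝ) ^ K - ((d - 1 : ℕ) : ℝ) ^ K) * C := by
        refine Finset.sum_le_sum fun d _ => ?_
        rw [norm_mul]
        have h1 : ‖(((d : ℕ) : ℂ) ^ K - ((d - 1 : ℕ) : ℂ) ^ K)‖
            = ((d : ℕ) : ℝ) ^ K - ((d - 1 : ℕ) : ℝ) ^ K := by
          have he : (((d : ℕ) : ℂ) ^ K - ((d - 1 : ℕ) : ℂ) ^ K)
              = ((((d : ℕ) : ℝ) ^ K - ((d - 1 : ℕ) : ℝ) ^ K : ℝ) : ℂ) := by push_cast; ring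
          rw [he, Complex.norm_real, Real.norm_eq_abs, abs_of_nonneg]
          have h2 : ((d - 1 : ℕ) : ℝ) ≤ ((d : ℕ) : ℝ) := by exact_mod_cast Nat.sub_le d 1
          have := pow_le_pow_left₀ (by positivity) h2 K
          linarith
        rw [h1]
        refine mul_le_mul_of_nonneg_left (hC d Y) ?_
        have h2 : ((d - 1 : ℕ) : ℝ) ≤ ((d : ℕ) : ℝ) := by exact_mod_cast Nat.sub_le d 1
        have := pow_le_pow_left₀ (by positivity) h2 K
        linarith
    _ = C * ((Y : ℕ) : ℝ) ^ K := by
        rw [← Finset.sum_mul, ← tele_pow K hK Y, mul_comm]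


/-- For a Dirichlet character `χ mod N` with `χ²` not principal, any Dirichlet character `ψ`,
and `k ≥ 1`: `∑_{bc ≤ X} χ²(b) ψ(c) b^{2k} = O(X^{2k})`. -/
theorem hyperbola_sum_nonprincipal_isBigO (N N₂ : ℕ)
    (χ : DirichletCharacter ℂ N) (ψ : DirichletCharacter ℂ N₂)
    (hχ : χ ^ 2 ≠ 1) (k : ℕ) (hk : 1 ≤ k) :
    (fun X : ℝ =>
      ∑ p ∈ (Icc 1 ⌊X⌋₊ ×ˢ Icc 1 ⌊X⌋₊).filter
          (fun p => ((p.1 * p.2 : ℕ) : ℝ) ≤ X),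
        (χ (p.1 : ZMod N)) ^ 2 * ψ (p.2 : ZMod N₂) * (p.1 : ℂ) ^ (2 * k))
      =O[Filter.atTop] fun X : ℝ => X ^ (2 * k) := by
  rcases Nat.eq_zero_or_pos N with rfl | hNpos
  · refine absurd (MulChar.ext fun u => ?_) hχ
    have h : ((u : ZMod 0)) * ((u : ZMod 0)) = 1 := Int.isUnit_mul_self u.isUnit
    rw [MulChar.pow_apply_coe, sq, ← map_mul, h, map_one, MulChar.one_apply_coe]
  haveI : NeZero N := ⟨hNpos.ne'⟩
  set K := 2 * k with hKdef
  have hK : 1 ≤ K := by omega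
  set φ : DirichletCharacter ℂ N := χ ^ 2 with hφdef
  have hφ : φ ≠ 1 := hχ
  set C0 : ℝ := ∑ b ∈ range N, ‖φ ((b:ℕ) : ZMod N)‖ with hC0def
  have hrange : ∀ n, ‖∑ b ∈ range n, φ ((b:ℕ):ZMod N)‖ ≤ C0 := range_bound φ hφ
  have hC0' : 0 ≤ C0 := le_trans (norm_nonneg _) (hrange 0)
  have hint : ∀ d Y : ℕ, ‖∑ b ∈ Icc d Y, φ ((b:ℕ):ZMod N)‖ ≤ 2 * C0 :=
    interval_bound φ C0 hrange
  have habel := abel_bound φ K hK (2 * C0) hint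
  have hTsummable : Summable (fun n : ℕ => 1 / ((n:ℕ):ℝ) ^ 2) := by
    simpa using Real.summable_one_div_nat_pow.mpr one_lt_two
  set T : ℝ := ∑' n : ℕ, 1 / ((n:ℕ):ℝ) ^ 2 with hTdef
  have hT0 : 0 ≤ T := tsum_nonneg fun n => by positivity
  rw [Asymptotics.isBigO_iff]
  refine ⟨2 * C0 * T, ?_⟩
  filter_upwards [Filter.eventually_ge_atTop (1:ℝ)] with X hX
  set M := ⌊X⌋₊ with hMdef
  have hX0 : (0:ℝ) ≤ X := by linarith
  have hMX : ((M:ℕ):ℝ) ≤ X := Nat.floor_le hX0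
  have hsum : (∑ p ∈ (Icc 1 M ×ˢ Icc 1 M).filter (fun p => ((p.1 * p.2 : ℕ) : ℝ) ≤ X),
        (χ ((p.1:ℕ) : ZMod N)) ^ 2 * ψ ((p.2:ℕ) : ZMod N₂) * ((p.1:ℕ) : ℂ) ^ K)
      = ∑ c ∈ Icc 1 M, ψ ((c:ℕ) : ZMod N₂)
          * ∑ b ∈ Icc 1 (M / c), φ ((b:ℕ):ZMod N) * ((b:ℕ):ℂ) ^ K := by
    rw [Finset.sum_filter, Finset.sum_product, Finset.sum_comm]
    refine Finset.sum_congr rfl fun c hc => ?_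
    have hc1 : 1 ≤ c := (Finset.mem_Icc.1 hc).1
    rw [← Finset.sum_filter]
    have hset : (Icc 1 M).filter (fun b => (((b * c : ℕ) : ℝ)) ≤ X) = Icc 1 (M / c) := by
      ext b
      simp only [Finset.mem_filter, Finset.mem_Icc]
      constructor
      · rintro ⟨⟨h1, _⟩, h3⟩
        exact ⟨h1, (Nat.le_div_iff_mul_le (by omega)).2 (Nat.le_floor h3)⟩
      · rintro ⟨h1, h2⟩
        have hbc : b * c ≤ M := (Nat.le_div_iff_mul_le (by omega)).1 h2
        have hbM : b ≤ M := le_trans (Nat.le_mul_of_pos_right b (by omega)) hbc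
        exact ⟨⟨h1, hbM⟩, le_trans (by exact_mod_cast Nat.cast_le.2 hbc) hMX⟩
    rw [hset, Finset.mul_sum]
    refine Finset.sum_congr rfl fun b _ => ?_
    rw [hφdef, MulChar.pow_apply' χ two_ne_zero]
    try ring
  rw [hsum]
  have hnormX : ‖X ^ K‖ = X ^ K := by
    rw [Real.norm_eq_abs, abs_of_nonneg (by positivity)]
  rw [hnormX]
  have key : ∀ c ∈ Icc 1 M,
      ‖ψ ((c:ℕ) : ZMod N₂) * ∑ b ∈ Icc 1 (M / c), φ ((b:ℕ):ZMod N) * ((b:ℕ):ℂ) ^ K‖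
        ≤ 2 * C0 * (X ^ K * (1 / ((c:ℕ):ℝ) ^ 2)) := by
    intro c hc
    have hc1 : 1 ≤ c := (Finset.mem_Icc.1 hc).1
    have hc1' : (1:ℝ) ≤ ((c:ℕ):ℝ) := by exact_mod_cast hc1
    have hcpos : (0:ℝ) < ((c:ℕ):ℝ) := by linarith
    rw [norm_mul]
    have h1 : ‖∑ b ∈ Icc 1 (M / c), φ ((b:ℕ):ZMod N) * ((b:ℕ):ℂ) ^ K‖
        ≤ 2 * C0 * (((M / c : ℕ):ℝ)) ^ K := habel _
    have h2 : (((M / c : ℕ):ℝ)) ^ K ≤ X ^ K * (1 / ((c:ℕ):ℝ) ^ 2) := by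
      have ha : (((M / c : ℕ):ℝ)) ≤ X / ((c:ℕ):ℝ) :=
        le_trans (Nat.cast_div_le) (by gcongr)
      have hb : (((M / c : ℕ):ℝ)) ^ K ≤ (X / ((c:ℕ):ℝ)) ^ K :=
        pow_le_pow_left₀ (by positivity) ha K
      have hc2 : ((c:ℕ):ℝ) ^ 2 ≤ ((c:ℕ):ℝ) ^ K := pow_le_pow_right₀ hc1' (by omega)
      calc (((M / c : ℕ):ℝ)) ^ K ≤ X ^ K / ((c:ℕ):ℝ) ^ K := by rw [← div_pow]; exact hb
        _ ≤ X ^ K / ((c:ℕ):ℝ) ^ 2 := by gcongr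
        _ = X ^ K * (1 / ((c:ℕ):ℝ) ^ 2) := by ring
    calc ‖ψ ((c:ℕ) : ZMod N₂)‖ * ‖∑ b ∈ Icc 1 (M / c), φ ((b:ℕ):ZMod N) * ((b:ℕ):ℂ) ^ K‖
        ≤ 1 * (2 * C0 * (((M / c : ℕ):ℝ)) ^ K) :=
          mul_le_mul (DirichletCharacter.norm_le_one ψ _) h1 (norm_nonneg _) zero_le_one
      _ = 2 * C0 * (((M / c : ℕ):ℝ)) ^ K := by ring
      _ ≤ 2 * C0 * (X ^ K * (1 / ((c:ℕ):ℝ) ^ 2)) := by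
          exact mul_le_mul_of_nonneg_left h2 (by linarith)
  calc ‖∑ c ∈ Icc 1 M, ψ ((c:ℕ) : ZMod N₂)
          * ∑ b ∈ Icc 1 (M / c), φ ((b:ℕ):ZMod N) * ((b:ℕ):ℂ) ^ K‖
      ≤ ∑ c ∈ Icc 1 M, 2 * C0 * (X ^ K * (1 / ((c:ℕ):ℝ) ^ 2)) :=
        le_trans (norm_sum_le _ _) (Finset.sum_le_sum key)
    _ = ∑ c ∈ Icc 1 M, 2 * C0 * X ^ K * (1 / ((c:ℕ):ℝ) ^ 2) :=
        Finset.sum_congr rfl fun c _ => by ring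
    _ = 2 * C0 * X ^ K * ∑ c ∈ Icc 1 M, (1 / ((c:ℕ):ℝ) ^ 2) := (Finset.mul_sum _ _ _).symm
    _ ≤ 2 * C0 * X ^ K * T := by
        refine mul_le_mul_of_nonneg_left ?_ (by positivity)
        exact Summable.sum_le_tsum _ (fun n _ => by positivity) hTsummable
    _ = 2 * C0 * T * X ^ K := by ring
end
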